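/- Let A = (a_1,…,a_{n+1}) with possibly repeated entries, partitioned into blocks I_1,…,I_s of equal values. For B satisfying b_i = b_j whenever a_i = a_j, define F_B = (1/2) ∑_{i<j, a_i≠a_j} ((b_i−b_j)/(a_i−a_j)) M_{ij}^2 + ∑ b_i (X^i)^2. Then for any two such vectors B_1, B_2 the functions F_{B_1} and F_{B_2} Poisson commute on T*S^n. -/

import Mathlib

open scoped BigOperators

/-- Ambient coordinates on `T*Sⁿ ⊂ ℝ^{n+1} × ℝ^{n+1}`: pairs `(x, p)`. -/
abbrev Phase (N : ℕ) := (Fin N → ℝ) × (Fin N → ℝ)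

/-- The canonical Poisson bracket in the ambient coordinates `(x, p)`:
`{F,G} = ∑ₖ (∂F/∂pₖ ∂G/∂xₖ - ∂F/∂xₖ ∂G/∂pₖ)`. -/
noncomputable def pb {N : ℕ} (F G : Phase N → ℝ) (z : Phase N) : ℝ :=
  ∑ k, (fderiv ℝ F z ((0 : Fin N → ℝ), Pi.single k 1)
          * fderiv ℝ G z (Pi.single k 1, (0 : Fin N → ℝ))
      - fderiv ℝ F z (Pi.single k 1, (0 : Fin N → ℝ))
          * fderiv ℝ G z ((0 : Fin N → ℝ), Pi.single k 1))

/-- `T*Sⁿ` realized as the constraint set `{|x| = 1, ⟨x,p⟩ = 0}`. -/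
def TS (N : ℕ) : Set (Phase N) := {z | (∑ k, (z.1 k)^2 = 1) ∧ (∑ k, z.1 k * z.2 k = 0)}

/-- Momentum function `M_{ij}` of the rotation `Xⁱ ∂_{Xʲ} - Xʲ ∂_{Xⁱ}`. -/
def Mf {N : ℕ} (i j : Fin N) (z : Phase N) : ℝ := z.1 i * z.2 j - z.1 j * z.2 i

/-- The integral of the degenerate Neumann system:
`F_B = (1/2) ∑_{i<j, aᵢ≠aⱼ} ((bᵢ-bⱼ)/(aᵢ-aⱼ)) M_{ij}² + ∑ᵢ bᵢ (Xⁱ)²`. -/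
noncomputable def FBdeg {N : ℕ} (a B : Fin N → ℝ) (z : Phase N) : ℝ :=
  (1/2) * ∑ i, ∑ j ∈ Finset.Ioi i,
      (if a i = a j then 0 else (B i - B j)/(a i - a j)) * (Mf i j z)^2
    + ∑ i, B i * (z.1 i)^2

open Finset

noncomputable def cf {N : ℕ} (a B : Fin N → ℝ) (i j : Fin N) : ℝ :=
  if a i = a j then 0 else (B i - B j)/(a i - a j)

lemma Mf_anti {N : ℕ} (i j : Fin N) (z : Phase N) : Mf i j z = - Mf j i z := by
  unfold Mf; ring

lemma cf_symm {N : ℕ} (a B : Fin N → ℝ) (i j : Fin N) : cf a B i j = cf a B j i := by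
  unfold cf
  by_cases h : a i = a j
  · rw [if_pos h, if_pos h.symm]
  · rw [if_neg h, if_neg (fun hh => h hh.symm), div_eq_div_iff (sub_ne_zero.mpr h)
      (sub_ne_zero.mpr (fun hh => h hh.symm))]
    ring

lemma cf_congr_left {N : ℕ} (a B : Fin N → ℝ) {i i' : Fin N} (j : Fin N)
    (h : a i = a i') (hB : B i = B i') : cf a B i j = cf a B i' j := by
  unfold cf; rw [h, hB]

lemma cf_bd {N : ℕ} (a B₁ B₂ : Fin N → ℝ)
    (h₁ : ∀ i j, a i = a j → B₁ i = B₁ j) (h₂ : ∀ i j, a i = a j → B₂ i = B₂ j)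
    (i k : Fin N) :
    (B₂ k - B₂ i) * cf a B₁ i k = (B₁ k - B₁ i) * cf a B₂ i k := by
  unfold cf
  by_cases h : a i = a k
  · rw [if_pos h, if_pos h, h₁ i k h, h₂ i k h]; ring
  · rw [if_neg h, if_neg h]
    field_simp
    ring

lemma cf_cyc {N : ℕ} (a B₁ B₂ : Fin N → ℝ)
    (h₁ : ∀ i j, a i = a j → B₁ i = B₁ j) (h₂ : ∀ i j, a i = a j → B₂ i = B₂ j)
    (i k j : Fin N) :
    cf a B₁ i k * (cf a B₂ k j - cf a B₂ i j) + cf a B₁ k j * (cf a B₂ i j - cf a B₂ i k)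
      + cf a B₁ i j * (cf a B₂ i k - cf a B₂ k j) = 0 := by
  by_cases hik : a i = a k
  · have e1 : cf a B₁ i k = 0 := by unfold cf; rw [if_pos hik]
    have e2 : cf a B₂ i k = 0 := by unfold cf; rw [if_pos hik]
    have e3 : cf a B₁ i j = cf a B₁ k j := cf_congr_left a B₁ j hik (h₁ i k hik)
    have e4 : cf a B₂ i j = cf a B₂ k j := cf_congr_left a B₂ j hik (h₂ i k hik)
    rw [e1, e2, e3, e4]; ring
  · by_cases hkj : a k = a j
    · have e1 : cf a B₁ k j = 0 := by unfold cf; rw [if_pos hkj]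
      have e2 : cf a B₂ k j = 0 := by unfold cf; rw [if_pos hkj]
      have e3 : cf a B₁ i j = cf a B₁ i k := by
        rw [cf_symm, cf_congr_left a B₁ i hkj.symm (h₁ j k hkj.symm), cf_symm]
      have e4 : cf a B₂ i j = cf a B₂ i k := by
        rw [cf_symm, cf_congr_left a B₂ i hkj.symm (h₂ j k hkj.symm), cf_symm]
      rw [e1, e2, e3, e4]; ring
    · by_cases hij : a i = a j
      · have e1 : cf a B₁ i j = 0 := by unfold cf; rw [if_pos hij]
        have e2 : cf a B₂ i j = 0 := by unfold cf; rw [if_pos hij]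
        have e3 : cf a B₁ k j = cf a B₁ i k := by
          rw [cf_symm a B₁ k j, cf_congr_left a B₁ k hij.symm (h₁ j i hij.symm)]
        have e4 : cf a B₂ k j = cf a B₂ i k := by
          rw [cf_symm a B₂ k j, cf_congr_left a B₂ k hij.symm (h₂ j i hij.symm)]
        rw [e1, e2, e3, e4]; ring
      · unfold cf
        rw [if_neg hik, if_neg hik, if_neg hkj, if_neg hkj, if_neg hij, if_neg hij]
        have n1 := sub_ne_zero.mpr hik
        have n2 := sub_ne_zero.mpr hkj
        have n3 := sub_ne_zero.mpr hij
        field_simp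
        ring

noncomputable def XC (N : ℕ) (i : Fin N) : Phase N →L[ℝ] ℝ :=
  (ContinuousLinearMap.proj i).comp (ContinuousLinearMap.fst ℝ (Fin N → ℝ) (Fin N → ℝ))
noncomputable def PC (N : ℕ) (i : Fin N) : Phase N →L[ℝ] ℝ :=
  (ContinuousLinearMap.proj i).comp (ContinuousLinearMap.snd ℝ (Fin N → ℝ) (Fin N → ℝ))

lemma hasX {N : ℕ} (i : Fin N) (z : Phase N) :
    HasFDerivAt (fun z : Phase N => z.1 i) (XC N i) z := (XC N i).hasFDerivAt
lemma hasP {N : ℕ} (i : Fin N) (z : Phase N) :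
    HasFDerivAt (fun z : Phase N => z.2 i) (PC N i) z := (PC N i).hasFDerivAt

noncomputable def DM {N : ℕ} (i j : Fin N) (z : Phase N) : Phase N →L[ℝ] ℝ :=
  (z.1 i • PC N j + z.2 j • XC N i) - (z.1 j • PC N i + z.2 i • XC N j)

lemma hasM {N : ℕ} (i j : Fin N) (z : Phase N) :
    HasFDerivAt (Mf i j) (DM i j z) z :=
  ((hasX i z).mul (hasP j z)).sub ((hasX j z).mul (hasP i z))

lemma hasFB {N : ℕ} (a B : Fin N → ℝ) (z : Phase N) :
    HasFDerivAt (FBdeg a B)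
      ((1/2 : ℝ) • (∑ i, ∑ j ∈ Finset.Ioi i,
          cf a B i j • (Mf i j z • DM i j z + Mf i j z • DM i j z))
        + ∑ i, B i • (z.1 i • XC N i + z.1 i • XC N i)) z := by
  have e : FBdeg a B = fun z : Phase N =>
      (1/2 : ℝ) * ∑ i, ∑ j ∈ Finset.Ioi i, cf a B i j * (Mf i j z * Mf i j z)
        + ∑ i, B i * (z.1 i * z.1 i) := by
    funext z; unfold FBdeg cf; simp only [pow_two]
  rw [e]
  exact (HasFDerivAt.const_mul
      (HasFDerivAt.fun_sum fun i _ => HasFDerivAt.fun_sum fun j _ =>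
        (((hasM i j z).mul (hasM i j z)).const_mul _) ) (1/2 : ℝ)).add
    (HasFDerivAt.fun_sum fun i _ => ((hasX i z).mul (hasX i z)).const_mul (B i))

lemma fderivFB {N : ℕ} (a B : Fin N → ℝ) (z : Phase N) (v : Phase N) :
    fderiv ℝ (FBdeg a B) z v =
      (1/2 : ℝ) * (∑ i, ∑ j ∈ Finset.Ioi i,
          cf a B i j * (2 * Mf i j z * (v.1 i * z.2 j + z.1 i * v.2 j
            - (v.1 j * z.2 i + z.1 j * v.2 i))))
        + ∑ i, B i * (2 * z.1 i * v.1 i) := by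
  rw [(hasFB a B z).fderiv]
  simp only [ContinuousLinearMap.add_apply, ContinuousLinearMap.smul_apply,
    ContinuousLinearMap.coe_sum', Finset.sum_apply, ContinuousLinearMap.sub_apply,
    DM, XC, PC, ContinuousLinearMap.comp_apply, ContinuousLinearMap.coe_fst',
    ContinuousLinearMap.coe_snd', ContinuousLinearMap.proj_apply, smul_eq_mul]
  rw [Finset.mul_sum]
  congr 1
  · rw [Finset.mul_sum]; apply Finset.sum_congr rfl; intro i _
    rw [Finset.mul_sum, Finset.mul_sum]; apply Finset.sum_congr rfl; intro j _
    ring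
  · apply Finset.sum_congr rfl; intro i _; ring

lemma delta_sum {N : ℕ} (A : Fin N → Fin N → ℝ) (hA : ∀ i j, A i j = -A j i)
    (u : Fin N → ℝ) (k : Fin N) :
    ∑ i, ∑ j ∈ Finset.Ioi i,
        ((if j = k then A i j * u i else 0) - (if i = k then A i j * u j else 0))
      = ∑ i, A i k * u i := by
  have hdiag : A k k = 0 := by have := hA k k; linarith
  have step1 : ∀ i : Fin N, ∑ j ∈ Finset.Ioi i,
      ((if j = k then A i j * u i else 0) - (if i = k then A i j * u j else 0))
      = (if i < k then A i k * u i else 0) - (if i = k then ∑ j ∈ Finset.Ioi i, A i j * u j else 0) := by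
    intro i
    rw [Finset.sum_sub_distrib, Finset.sum_ite_eq' (Finset.Ioi i) k (fun j => A i j * u i)]
    congr 1
    · simp [Finset.mem_Ioi]
    · split_ifs <;> simp
  calc ∑ i, ∑ j ∈ Finset.Ioi i,
        ((if j = k then A i j * u i else 0) - (if i = k then A i j * u j else 0))
      = ∑ i, ((if i < k then A i k * u i else 0)
          - (if i = k then ∑ j ∈ Finset.Ioi i, A i j * u j else 0)) :=
        Finset.sum_congr rfl (fun i _ => step1 i)
    _ = ∑ i, (if i < k then A i k * u i else 0)
          - ∑ i, (if i = k then ∑ j ∈ Finset.Ioi i, A i j * u j else 0) := Finset.sum_sub_distrib _ _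
    _ = ∑ i, (if i < k then A i k * u i else 0) + ∑ j ∈ Finset.Ioi k, A j k * u j := by
        rw [Finset.sum_ite_eq' Finset.univ k]
        simp only [Finset.mem_univ, if_true]
        rw [sub_eq_add_neg, ← Finset.sum_neg_distrib]
        congr 1
        exact Finset.sum_congr rfl (fun j _ => by rw [hA k j]; ring)
    _ = ∑ i, (if i < k then A i k * u i else 0) + ∑ j, (if j ∈ Finset.Ioi k then A j k * u j else 0) := by
        rw [Finset.sum_ite_mem, Finset.univ_inter]
    _ = ∑ i, A i k * u i := by
        rw [← Finset.sum_add_distrib]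
        apply Finset.sum_congr rfl; intro i _
        simp only [Finset.mem_Ioi]
        rcases lt_trichotomy i k with h | h | h
        · simp [h, not_lt_of_gt h, ne_of_lt h]
        · subst h; simp [hdiag]
        · simp [h, not_lt_of_gt h, (ne_of_gt h)]

section
variable {N : ℕ}

def sw2 {N : ℕ} : (Fin N × Fin N × Fin N) ≃ (Fin N × Fin N × Fin N) :=
  ⟨fun t => (t.2.2, t.2.1, t.1), fun t => (t.2.2, t.2.1, t.1), fun ⟨a,b,c⟩ => rfl, fun ⟨a,b,c⟩ => rfl⟩
def sw3 {N : ℕ} : (Fin N × Fin N × Fin N) ≃ (Fin N × Fin N × Fin N) :=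
  ⟨fun t => (t.2.1, t.1, t.2.2), fun t => (t.2.1, t.1, t.2.2), fun ⟨a,b,c⟩ => rfl, fun ⟨a,b,c⟩ => rfl⟩
def sw4 {N : ℕ} : (Fin N × Fin N × Fin N) ≃ (Fin N × Fin N × Fin N) :=
  ⟨fun t => (t.2.2, t.1, t.2.1), fun t => (t.2.1, t.2.2, t.1), fun ⟨a,b,c⟩ => rfl, fun ⟨a,b,c⟩ => rfl⟩
def sw5 {N : ℕ} : (Fin N × Fin N × Fin N) ≃ (Fin N × Fin N × Fin N) :=
  ⟨fun t => (t.2.1, t.2.2, t.1), fun t => (t.2.2, t.1, t.2.1), fun ⟨a,b,c⟩ => rfl, fun ⟨a,b,c⟩ => rfl⟩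
def sw6 {N : ℕ} : (Fin N × Fin N × Fin N) ≃ (Fin N × Fin N × Fin N) :=
  ⟨fun t => (t.1, t.2.2, t.2.1), fun t => (t.1, t.2.2, t.2.1), fun ⟨a,b,c⟩ => rfl, fun ⟨a,b,c⟩ => rfl⟩

lemma T2_vanish (c d : Fin N → Fin N → ℝ) (x p : Fin N → ℝ)
    (hc : ∀ i j, c i j = c j i) (hd : ∀ i j, d i j = d j i)
    (cyc : ∀ i k j, c i k * (d k j - d i j) + c k j * (d i j - d i k)
      + c i j * (d i k - d k j) = 0)
    (M : Fin N → Fin N → ℝ) (hM : ∀ i j, M i j = x i * p j - x j * p i)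
    (g : Fin N → Fin N → Fin N → ℝ)
    (hg : ∀ i k j, g i k j = (c i k * d j k - c j k * d i k) * ((M i k * M j k) * (x j * p i))) :
    (∑ k, ∑ i, ∑ j, g i k j) = 0 := by
  have conv1 : (∑ k, ∑ i, ∑ j, g i k j)
      = ∑ t : Fin N × Fin N × Fin N, g t.2.1 t.1 t.2.2 := by
    rw [Fintype.sum_prod_type]
    exact Finset.sum_congr rfl fun k _ => by rw [Fintype.sum_prod_type]
  set G : Fin N × Fin N × Fin N → ℝ := fun t => g t.2.1 t.1 t.2.2 with hG
  have e2 : (∑ t : Fin N × Fin N × Fin N, g t.2.1 t.2.2 t.1) = ∑ t, G t :=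
    Fintype.sum_equiv sw2 _ _ (fun t => rfl)
  have e3 : (∑ t : Fin N × Fin N × Fin N, g t.1 t.2.1 t.2.2) = ∑ t, G t :=
    Fintype.sum_equiv sw3 _ _ (fun t => rfl)
  have e4 : (∑ t : Fin N × Fin N × Fin N, g t.1 t.2.2 t.2.1) = ∑ t, G t :=
    Fintype.sum_equiv sw4 _ _ (fun t => rfl)
  have e5 : (∑ t : Fin N × Fin N × Fin N, g t.2.2 t.2.1 t.1) = ∑ t, G t :=
    Fintype.sum_equiv sw5 _ _ (fun t => rfl)
  have e6 : (∑ t : Fin N × Fin N × Fin N, g t.2.2 t.1 t.2.1) = ∑ t, G t :=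
    Fintype.sum_equiv sw6 _ _ (fun t => rfl)
  have point : ∀ t : Fin N × Fin N × Fin N,
      G t + g t.2.1 t.2.2 t.1 + g t.1 t.2.1 t.2.2 + g t.1 t.2.2 t.2.1
        + g t.2.2 t.2.1 t.1 + g t.2.2 t.1 t.2.1 = 0 := by
    rintro ⟨k, i, j⟩
    simp only [hG]
    rw [hg i k j, hg i j k, hg k i j, hg k j i, hg j i k, hg j k i]
    rw [show c k i = c i k from (hc i k).symm, show c j i = c i j from (hc i j).symm,
        show c j k = c k j from (hc k j).symm,
        show d k i = d i k from (hd i k).symm, show d j i = d i j from (hd i j).symm,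
        show d j k = d k j from (hd k j).symm,
        hM i k, hM j k, hM i j, hM k j, hM k i, hM j i]
    linear_combination ((x i * p k - x k * p i) * (x k * p j - x j * p k)
      * (x i * p j - x j * p i)) * cyc i k j
  have h6 : (∑ t, G t) + (∑ t : Fin N × Fin N × Fin N, g t.2.1 t.2.2 t.1)
      + (∑ t : Fin N × Fin N × Fin N, g t.1 t.2.1 t.2.2)
      + (∑ t : Fin N × Fin N × Fin N, g t.1 t.2.2 t.2.1)
      + (∑ t : Fin N × Fin N × Fin N, g t.2.2 t.2.1 t.1)
      + (∑ t : Fin N × Fin N × Fin N, g t.2.2 t.1 t.2.1) = 0 := by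
    rw [← Finset.sum_add_distrib, ← Finset.sum_add_distrib, ← Finset.sum_add_distrib,
      ← Finset.sum_add_distrib, ← Finset.sum_add_distrib]
    rw [Finset.sum_congr rfl fun t _ => point t]
    simp
  rw [e2, e3, e4, e5, e6] at h6
  rw [conv1]
  linarith
end

lemma key_algebra {N : ℕ} (c d : Fin N → Fin N → ℝ) (b b' x p : Fin N → ℝ)
    (hc : ∀ i j, c i j = c j i) (hd : ∀ i j, d i j = d j i)
    (hbd : ∀ i k, (b' k - b' i) * c i k = (b k - b i) * d i k)
    (cyc : ∀ i k j, c i k * (d k j - d i j) + c k j * (d i j - d i k)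
      + c i j * (d i k - d k j) = 0)
    (M : Fin N → Fin N → ℝ) (hM : ∀ i j, M i j = x i * p j - x j * p i) :
    ∑ k, ((∑ i, (c i k * M i k) * x i) * (2 * b' k * x k - ∑ i, (d i k * M i k) * p i)
        - (2 * b k * x k - ∑ i, (c i k * M i k) * p i) * (∑ i, (d i k * M i k) * x i)) = 0 := by
  set f : Fin N → Fin N → ℝ :=
    fun i k => (2 * b' k * c i k - 2 * b k * d i k) * (M i k * (x i * x k)) with hf
  set g : Fin N → Fin N → Fin N → ℝ :=
    fun i k j => (c i k * d j k - c j k * d i k) * ((M i k * M j k) * (x j * p i)) with hg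
  have expand : ∀ k : Fin N,
      (∑ i, (c i k * M i k) * x i) * (2 * b' k * x k - ∑ i, (d i k * M i k) * p i)
        - (2 * b k * x k - ∑ i, (c i k * M i k) * p i) * (∑ i, (d i k * M i k) * x i)
      = (∑ i, f i k) + ∑ i, ∑ j, g i k j := by
    intro k
    have h1 : (∑ i, (c i k * M i k) * x i) * (2 * b' k * x k)
        - (2 * b k * x k) * (∑ i, (d i k * M i k) * x i) = ∑ i, f i k := by
      rw [Finset.sum_mul, Finset.mul_sum, ← Finset.sum_sub_distrib]
      exact Finset.sum_congr rfl fun i _ => by rw [hf]; ring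
    have h2 : (∑ i, (c i k * M i k) * p i) * (∑ j, (d j k * M j k) * x j)
        - (∑ i, (c i k * M i k) * x i) * (∑ j, (d j k * M j k) * p j)
        = ∑ i, ∑ j, g i k j := by
      rw [Finset.sum_mul_sum, Finset.sum_mul_sum]
      rw [show (∑ i, ∑ j, ((c i k * M i k) * x i) * ((d j k * M j k) * p j))
          = ∑ i, ∑ j, ((c j k * M j k) * x j) * ((d i k * M i k) * p i) from Finset.sum_comm]
      rw [← Finset.sum_sub_distrib]
      refine Finset.sum_congr rfl fun i _ => ?_
      rw [← Finset.sum_sub_distrib]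
      exact Finset.sum_congr rfl fun j _ => by rw [hg]; ring
    calc (∑ i, (c i k * M i k) * x i) * (2 * b' k * x k - ∑ i, (d i k * M i k) * p i)
          - (2 * b k * x k - ∑ i, (c i k * M i k) * p i) * (∑ i, (d i k * M i k) * x i)
        = ((∑ i, (c i k * M i k) * x i) * (2 * b' k * x k)
            - (2 * b k * x k) * (∑ i, (d i k * M i k) * x i))
          + ((∑ i, (c i k * M i k) * p i) * (∑ j, (d j k * M j k) * x j)
            - (∑ i, (c i k * M i k) * x i) * (∑ j, (d j k * M j k) * p j)) := by ring
      _ = (∑ i, f i k) + ∑ i, ∑ j, g i k j := by rw [h1, h2]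
  rw [Finset.sum_congr rfl fun k _ => expand k, Finset.sum_add_distrib]
  have hT1 : (∑ k, ∑ i, f i k) = 0 := by
    have h0 : ∀ i k : Fin N, f i k + f k i = 0 := by
      intro i k
      have h := hbd i k
      rw [hf]
      simp only
      rw [← hc i k, ← hd i k, hM i k, hM k i]
      linear_combination (2 * (x i * p k - x k * p i) * (x i * x k)) * h
    have e : (∑ k, ∑ i, f i k) = ∑ k, ∑ i, f k i := Finset.sum_comm
    have e2 : (∑ k, ∑ i, f i k) + (∑ k, ∑ i, f i k) = 0 := by
      nth_rewrite 2 [e]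
      rw [← Finset.sum_add_distrib]
      rw [Finset.sum_congr rfl fun k _ => (Finset.sum_add_distrib).symm]
      simp [h0]
    linarith
  have hT2 : (∑ k, ∑ i, ∑ j, g i k j) = 0 :=
    T2_vanish c d x p hc hd cyc M hM g (fun i k j => by rw [hg])
  rw [hT1, hT2, add_zero]

section
variable {N : ℕ}

lemma cfM_anti (a B : Fin N → ℝ) (z : Phase N) :
    ∀ i j, cf a B i j * Mf i j z = -(cf a B j i * Mf j i z) := by
  intro i j; rw [cf_symm, Mf_anti]; ring

lemma fderiv_p (a B : Fin N → ℝ) (z : Phase N) (k : Fin N) :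
    fderiv ℝ (FBdeg a B) z ((0 : Fin N → ℝ), Pi.single k 1) =
      ∑ i, (cf a B i k * Mf i k z) * z.1 i := by
  rw [fderivFB]
  have step : ∀ i : Fin N, ∀ j : Fin N,
      cf a B i j * (2 * Mf i j z * ((0 : Fin N → ℝ) i * z.2 j + z.1 i * (Pi.single k 1 : Fin N → ℝ) j
        - ((0 : Fin N → ℝ) j * z.2 i + z.1 j * (Pi.single k 1 : Fin N → ℝ) i)))
      = 2 * ((if j = k then (cf a B i j * Mf i j z) * z.1 i else 0)
          - (if i = k then (cf a B i j * Mf i j z) * z.1 j else 0)) := by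
    intro i j
    simp only [Pi.zero_apply, Pi.single_apply]
    split_ifs <;> ring
  rw [Finset.sum_congr rfl fun i _ => Finset.sum_congr rfl fun j _ => step i j]
  rw [Finset.sum_congr rfl fun i _ => (Finset.mul_sum _ _ (2:ℝ)).symm, ← Finset.mul_sum]
  rw [delta_sum (fun i j => cf a B i j * Mf i j z) (cfM_anti a B z) z.1 k]
  simp

lemma fderiv_x (a B : Fin N → ℝ) (z : Phase N) (k : Fin N) :
    fderiv ℝ (FBdeg a B) z (Pi.single k 1, (0 : Fin N → ℝ)) =
      2 * B k * z.1 k - ∑ i, (cf a B i k * Mf i k z) * z.2 i := by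
  rw [fderivFB]
  have step : ∀ i : Fin N, ∀ j : Fin N,
      cf a B i j * (2 * Mf i j z * ((Pi.single k 1 : Fin N → ℝ) i * z.2 j + z.1 i * (0 : Fin N → ℝ) j
        - ((Pi.single k 1 : Fin N → ℝ) j * z.2 i + z.1 j * (0 : Fin N → ℝ) i)))
      = (-2) * ((if j = k then (cf a B i j * Mf i j z) * z.2 i else 0)
          - (if i = k then (cf a B i j * Mf i j z) * z.2 j else 0)) := by
    intro i j
    simp only [Pi.zero_apply, Pi.single_apply]
    split_ifs <;> ring
  rw [Finset.sum_congr rfl fun i _ => Finset.sum_congr rfl fun j _ => step i j]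
  rw [Finset.sum_congr rfl fun i _ => (Finset.mul_sum _ _ ((-2):ℝ)).symm, ← Finset.mul_sum]
  rw [delta_sum (fun i j => cf a B i j * Mf i j z) (cfM_anti a B z) z.2 k]
  have step2 : ∀ i : Fin N, B i * (2 * z.1 i * (Pi.single k 1 : Fin N → ℝ) i)
      = if i = k then B i * (2 * z.1 i) else 0 := by
    intro i
    simp only [Pi.single_apply]
    split_ifs <;> ring
  rw [Finset.sum_congr rfl fun i _ => step2 i, Finset.sum_ite_eq' Finset.univ k]
  simp
  ring
end

/-- Let `A = (a₁,…,a_{n+1})` have possibly repeated entries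
(partitioned into blocks of equal values).  For any two vectors `B₁, B₂` that are
constant on each block (`bᵢ = bⱼ` whenever `aᵢ = aⱼ`), the functions `F_{B₁}` and
`F_{B₂}` Poisson commute on `T*Sⁿ`. -/
theorem degenerate_neumann_integrals_commute (n : ℕ) (a : Fin (n+1) → ℝ)
    (B₁ B₂ : Fin (n+1) → ℝ)
    (h₁ : ∀ i j, a i = a j → B₁ i = B₁ j)
    (h₂ : ∀ i j, a i = a j → B₂ i = B₂ j) :
    ∀ z ∈ TS (n+1), pb (FBdeg a B₁) (FBdeg a B₂) z = 0 := by
  intro z _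
  unfold pb
  simp only [fderiv_p, fderiv_x]
  exact key_algebra (fun i j => cf a B₁ i j) (fun i j => cf a B₂ i j) B₁ B₂ z.1 z.2
    (fun i j => cf_symm a B₁ i j) (fun i j => cf_symm a B₂ i j)
    (fun i k => cf_bd a B₁ B₂ h₁ h₂ i k)
    (fun i k j => cf_cyc a B₁ B₂ h₁ h₂ i k j)
    (fun i j => Mf i j z) (fun i j => rfl)
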